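/- Cotabulator of a Mealy automaton in Mly(Set): for (E, d, s) : A ⇸ B, let q : A ⊕ B → T be the coequalizer (quotient) of the two maps A × E → A ⊕ B given by (a,e) ↦ inl(a) and (a,e) ↦ inr(s(a,e)). Then the pair of functions (q ∘ inl : A → T, q ∘ inr : B → T) together with the unique map E → Unit forms a cell from (E,d,s) to the loose identity on T, and it is universal: every cell from (E,d,s) to a loose identity on a set X along p : A → X, r : B → X factors through a unique function T → X. -/
import Mathlib

/-- The cotabulator relation on `A ⊕ B`: `inl a ~ inr (s a e)`. -/
def cotabRel {A B E : Type*} (s : A → E → B) (x y : A ⊕ B) : Prop :=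
  ∃ (a : A) (e : E), x = Sum.inl a ∧ y = Sum.inr (s a e)

theorem mealy_cotabulator {A B E : Type*} (d : A → E → E) (s : A → E → B) :
    -- the pair (q ∘ inl, q ∘ inr) forms a cell from (E, d, s) to the loose
    -- identity on T = Quot (cotabRel s):
    (∀ (a : A) (e : E),
      Quot.mk (cotabRel s) (Sum.inr (s a e)) = Quot.mk (cotabRel s) (Sum.inl a)) ∧
    -- universality: every cell from (E, d, s) to a loose identity on X
    -- along p : A → X, r : B → X factors through a unique map T → X
    (∀ (X : Type*) (p : A → X) (r : B → X),
      (∀ (a : A) (e : E), r (s a e) = p a) →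
      ∃! t : Quot (cotabRel s) → X,
        (∀ a : A, t (Quot.mk (cotabRel s) (Sum.inl a)) = p a) ∧
        (∀ b : B, t (Quot.mk (cotabRel s) (Sum.inr b)) = r b)) := by
  constructor
  · intro a e
    exact (Quot.sound ⟨a, e, rfl, rfl⟩).symm
  · intro X p r h
    refine ⟨Quot.lift (Sum.elim p r) ?_, ⟨fun a => rfl, fun b => rfl⟩, ?_⟩
    · rintro x y ⟨a, e, rfl, rfl⟩
      exact (h a e).symm
    · rintro t ⟨h1, h2⟩
      funext q
      induction q using Quot.ind with
      | _ x => cases x with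
        | inl a => exact h1 a
        | inr b => exact h2 b
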